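/- If a stick is broken into n pieces and the pieces are uniform spacings, the probability that all n pieces form an n-gon (i.e., every piece is less than 1/2) is 1 − n/2^{n−1}. -/

import Mathlib

open MeasureTheory Set

/-- The list of spacings (piece lengths) of `[0,1]` determined by the breakpoints `ω`. -/
noncomputable def spacings (m : ℕ) (ω : Fin m → ℝ) : List ℝ :=
  let sorted := ((0 : ℝ) :: (List.ofFn ω ++ [1])).insertionSort (· ≤ ·)
  List.zipWith (fun a b => b - a) sorted sorted.tail

/-- `a` is the left endpoint of a big (≥ 1/2) gap. -/
def badAt {m : ℕ} (a : ℝ) (ω : Fin m → ℝ) : Prop :=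
  a ≤ 1/2 ∧ ∀ j, ω j ≤ a ∨ a + 1/2 ≤ ω j

def Bset (m : ℕ) : Option (Fin m) → Set (Fin m → ℝ)
  | none => {ω | (∀ i, ω i ∈ Icc (0:ℝ) 1) ∧ badAt 0 ω}
  | some i => {ω | (∀ i, ω i ∈ Icc (0:ℝ) 1) ∧ badAt (ω i) ω}

open Classical in
theorem spacings_lt_half_iff {m : ℕ} (ω : Fin m → ℝ) (hω : ∀ i, ω i ∈ Icc (0:ℝ) 1) :
    (∀ g ∈ spacings m ω, g < 1/2) ↔ ¬(badAt 0 ω ∨ ∃ i, badAt (ω i) ω) := by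
  set L : List ℝ := (0 : ℝ) :: (List.ofFn ω ++ [1]) with hL
  set S : List ℝ := L.insertionSort (· ≤ ·) with hSdef
  have hperm : S.Perm L := List.perm_insertionSort _ _
  have hsorted : S.Pairwise (· ≤ ·) := List.pairwise_insertionSort _ _
  have hmemL : ∀ x : ℝ, x ∈ L ↔ x = 0 ∨ x ∈ Set.range ω ∨ x = 1 := by
    intro x
    simp only [hL, List.mem_cons, List.mem_append, List.mem_ofFn, List.mem_singleton]
    tauto
  have hlen : S.length = m + 2 := by
    rw [hperm.length_eq]
    simp [hL]
  have hmono : ∀ (i j : ℕ) (hi : i < S.length) (hj : j < S.length), i ≤ j → S[i] ≤ S[j] := by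
    intro i j hi hj hij
    rcases eq_or_lt_of_le hij with rfl | h
    · rfl
    · exact List.pairwise_iff_getElem.mp hsorted i j hi hj h
  have hbound : ∀ x ∈ S, x ∈ Icc (0:ℝ) 1 := by
    intro x hx
    rw [hperm.mem_iff, hmemL] at hx
    rcases hx with rfl | ⟨i, rfl⟩ | rfl
    · exact ⟨le_refl _, zero_le_one⟩
    · exact hω i
    · exact ⟨zero_le_one, le_refl _⟩
  have h0S : (0:ℝ) ∈ S := by rw [hperm.mem_iff, hmemL]; left; rfl
  have h1S : (1:ℝ) ∈ S := by rw [hperm.mem_iff, hmemL]; right; right; rfl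
  have hsp : spacings m ω = List.zipWith (fun a b => b - a) S S.tail := rfl
  have hzlen : (List.zipWith (fun a b : ℝ => b - a) S S.tail).length = m + 1 := by
    rw [List.length_zipWith, List.length_tail, hlen]
    omega
  have hspmem : ∀ g : ℝ, g ∈ spacings m ω ↔
      ∃ (k : ℕ) (hk : k + 1 < S.length), g = S[k+1] - S[k] := by
    intro g
    rw [hsp, List.mem_iff_getElem]
    constructor
    · rintro ⟨k, hk0, rfl⟩
      have hk' : k + 1 < S.length := by rw [hzlen] at hk0; omega
      refine ⟨k, hk', ?_⟩
      rw [List.getElem_zipWith, List.getElem_tail]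
    · rintro ⟨k, hk', rfl⟩
      refine ⟨k, by rw [hzlen]; omega, ?_⟩
      rw [List.getElem_zipWith, List.getElem_tail]
  constructor
  · -- all gaps < 1/2 → not bad
    intro hgood hbad
    -- extract the anchor a with a ∈ S
    obtain ⟨a, haS, hhalf, hsplit⟩ :
        ∃ a : ℝ, a ∈ S ∧ a ≤ 1/2 ∧ ∀ j, ω j ≤ a ∨ a + 1/2 ≤ ω j := by
      rcases hbad with ⟨h1, h2⟩ | ⟨i, h1, h2⟩
      · exact ⟨0, h0S, h1, h2⟩
      · exact ⟨ω i, by rw [hperm.mem_iff, hmemL]; right; left; exact ⟨i, rfl⟩, h1, h2⟩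
    have hsplitS : ∀ x ∈ S, x ≤ a ∨ a + 1/2 ≤ x := by
      intro x hx
      rw [hperm.mem_iff, hmemL] at hx
      rcases hx with rfl | ⟨i, rfl⟩ | rfl
      · left; exact (hbound a haS).1
      · exact hsplit i
      · right; linarith
    -- find last index with S[k] ≤ a
    set P : ℕ → Prop := fun k => k < S.length ∧ S.getD k 0 ≤ a with hP
    have hP0 : P 0 := by
      refine ⟨by omega, ?_⟩
      rw [List.getD_eq_getElem _ _ (by omega)]
      obtain ⟨j0, hj0, hj0e⟩ := List.mem_iff_getElem.mp h0S
      calc S[0] ≤ S[j0] := hmono 0 j0 (by omega) hj0 (by omega)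
        _ = 0 := hj0e
        _ ≤ a := (hbound a haS).1
    set k : ℕ := Nat.findGreatest P (S.length - 1) with hk
    have hPk : P k := Nat.findGreatest_spec (by omega) hP0
    have hklt : k + 1 < S.length := by
      -- k ≠ S.length - 1 since S[last] ≥ 1 > a
      rcases lt_or_ge (k+1) S.length with h | h
      · exact h
      have hkb : k ≤ S.length - 1 := Nat.findGreatest_le _
      have hke : k = S.length - 1 := by omega
      obtain ⟨j1, hj1, hj1e⟩ := List.mem_iff_getElem.mp h1S
      have : S.getD k 0 ≤ a := hPk.2
      rw [List.getD_eq_getElem _ _ hPk.1] at this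
      have h1k : (1:ℝ) ≤ S[k] := by
        calc (1:ℝ) = S[j1] := hj1e.symm
          _ ≤ S[k] := hmono j1 k hj1 hPk.1 (by omega)
      linarith
    have hnP : ¬ P (k+1) := Nat.findGreatest_is_greatest (n := S.length - 1) (by omega) (by omega)
    have hSk1 : a < S[k+1] := by
      by_contra h
      exact hnP ⟨hklt, by rw [List.getD_eq_getElem _ _ hklt]; linarith⟩
    have hSk1' : a + 1/2 ≤ S[k+1] := by
      rcases hsplitS S[k+1] (List.getElem_mem _) with h | h
      · linarith
      · exact h
    have hSka : S[k] ≤ a := by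
      have := hPk.2; rwa [List.getD_eq_getElem _ _ hPk.1] at this
    have hg : S[k+1] - S[k] ∈ spacings m ω := (hspmem _).mpr ⟨k, hklt, rfl⟩
    have := hgood _ hg
    linarith
  · -- not bad → all gaps < 1/2
    intro hnb g hg
    by_contra hge
    push_neg at hge
    obtain ⟨k, hk, rfl⟩ := (hspmem g).mp hg
    set a : ℝ := S[k] with ha
    have haL : a ∈ L := hperm.subset (List.getElem_mem _)
    have hS1 : S[k+1] ≤ 1 := (hbound _ (List.getElem_mem _)).2
    have haibig : a + 1/2 ≤ S[k+1] := by linarith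
    have hahalf : a ≤ 1/2 := by linarith
    have hsplit : ∀ j, ω j ≤ a ∨ a + 1/2 ≤ ω j := by
      intro j
      have : ω j ∈ S := by rw [hperm.mem_iff, hmemL]; right; left; exact ⟨j, rfl⟩
      obtain ⟨l, hl, hle⟩ := List.mem_iff_getElem.mp this
      rcases le_or_gt l k with h | h
      · left; rw [← hle]; exact hmono l k hl (by omega) h
      · right; rw [← hle]
        calc a + 1/2 ≤ S[k+1] := haibig
          _ ≤ S[l] := hmono (k+1) l hk hl (by omega)
    rw [hmemL] at haL
    rcases haL with h0 | ⟨i, hi⟩ | h1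
    · exact hnb (Or.inl ⟨h0 ▸ hahalf, h0 ▸ hsplit⟩)
    · exact hnb (Or.inr ⟨i, hi ▸ hahalf, hi ▸ hsplit⟩)
    · linarith [(hbound _ (List.getElem_mem (l := S) (by omega : k + 1 < S.length))).2]

lemma measurable_Bset (m : ℕ) (o : Option (Fin m)) : MeasurableSet (Bset m o) := by
  have hbox : MeasurableSet {ω : Fin m → ℝ | ∀ i, ω i ∈ Icc (0:ℝ) 1} := by
    rw [show {ω : Fin m → ℝ | ∀ i, ω i ∈ Icc (0:ℝ) 1} = univ.pi (fun _ => Icc (0:ℝ) 1) by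
      ext ω; simp only [Set.mem_univ_pi, Set.mem_setOf_eq]]
    exact MeasurableSet.univ_pi (fun _ => measurableSet_Icc)
  cases o with
  | none =>
    have : Bset m none = {ω : Fin m → ℝ | ∀ i, ω i ∈ Icc (0:ℝ) 1} ∩
        ⋂ j, ({ω : Fin m → ℝ | ω j ≤ 0} ∪ {ω | 0 + 1/2 ≤ ω j}) := by
      ext ω
      simp only [Bset, badAt, mem_setOf_eq, mem_inter_iff, mem_iInter, mem_union]
      constructor
      · rintro ⟨h1, _, h3⟩; exact ⟨h1, h3⟩
      · rintro ⟨h1, h3⟩; exact ⟨h1, by norm_num, h3⟩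
    rw [this]
    exact hbox.inter (MeasurableSet.iInter fun j =>
      ((measurableSet_le (measurable_pi_apply j) measurable_const).union
        (measurableSet_le measurable_const (measurable_pi_apply j))))
  | some i =>
    have : Bset m (some i) = {ω : Fin m → ℝ | ∀ i, ω i ∈ Icc (0:ℝ) 1} ∩
        ({ω : Fin m → ℝ | ω i ≤ 1/2} ∩
          ⋂ j, ({ω : Fin m → ℝ | ω j ≤ ω i} ∪ {ω | ω i + 1/2 ≤ ω j})) := by
      ext ω
      simp only [Bset, badAt, mem_setOf_eq, mem_inter_iff, mem_iInter, mem_union]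
    rw [this]
    exact hbox.inter (((measurableSet_le (measurable_pi_apply i) measurable_const)).inter
      (MeasurableSet.iInter fun j =>
        ((measurableSet_le (measurable_pi_apply j) (measurable_pi_apply i)).union
          (measurableSet_le ((measurable_pi_apply i).add_const _) (measurable_pi_apply j)))))

lemma volume_box (m : ℕ) : volume {ω : Fin m → ℝ | ∀ i, ω i ∈ Icc (0:ℝ) 1} = 1 := by
  rw [show {ω : Fin m → ℝ | ∀ i, ω i ∈ Icc (0:ℝ) 1} = univ.pi (fun _ => Icc (0:ℝ) 1) by
    ext ω; simp only [Set.mem_univ_pi, Set.mem_setOf_eq]]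
  rw [volume_pi, Measure.pi_pi]
  simp [Real.volume_Icc]

lemma volume_Bset_none (m : ℕ) :
    volume (Bset m none) = ENNReal.ofReal (1/2) ^ m := by
  have hset : Bset m none = univ.pi (fun _ : Fin m => ({0} ∪ Icc (1/2) 1 : Set ℝ)) := by
    ext ω
    simp only [Bset, badAt, mem_setOf_eq, Set.mem_pi, mem_univ, forall_true_left,
      mem_union, mem_singleton_iff, mem_Icc]
    constructor
    · rintro ⟨h1, _, h3⟩ i
      rcases h3 i with h | h
      · left; exact le_antisymm h (h1 i).1
      · right; exact ⟨by linarith, (h1 i).2⟩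
    · intro h
      refine ⟨fun i => ?_, by norm_num, fun i => ?_⟩
      · rcases h i with h' | h'
        · exact ⟨h'.ge, by rw [h']; exact zero_le_one⟩
        · exact ⟨by linarith [h'.1], h'.2⟩
      · rcases h i with h' | h'
        · left; exact le_of_eq h'
        · right; linarith [h'.1]
  rw [hset, volume_pi, Measure.pi_pi]
  have hval : volume ({0} ∪ Icc (1/2) 1 : Set ℝ) = ENNReal.ofReal (1/2) := by
    rw [measure_union (by norm_num [Set.disjoint_singleton_left]) measurableSet_Icc]
    simp [Real.volume_Icc]
    norm_num
    rw [show (1/2:ℝ) = (2:ℝ)⁻¹ by norm_num, ENNReal.ofReal_inv_of_pos (by norm_num)]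
    simp
  simp only [hval, Finset.prod_const, Finset.card_univ, Fintype.card_fin]

lemma piFinSuccAbove_apply' {m : ℕ} (i : Fin (m+1)) (f : Fin (m+1) → ℝ) :
    (MeasurableEquiv.piFinSuccAbove (fun _ => ℝ) i) f = (f i, fun j => f (i.succAbove j)) := by
  rfl

lemma volume_Bset_some {m : ℕ} (i : Fin (m+1)) :
    volume (Bset (m+1) (some i)) = ENNReal.ofReal (1/2) ^ (m+1) := by
  set T : Set (ℝ × (Fin m → ℝ)) :=
    {p | (p.1 ∈ Icc (0:ℝ) 1 ∧ p.1 ≤ 1/2) ∧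
      ∀ j, p.2 j ∈ Icc (0:ℝ) 1 ∧ (p.2 j ≤ p.1 ∨ p.1 + 1/2 ≤ p.2 j)} with hT
  have h2meas : MeasurableSet {p : ℝ × (Fin m → ℝ) |
      ∀ j, p.2 j ∈ Icc (0:ℝ) 1 ∧ (p.2 j ≤ p.1 ∨ p.1 + 1/2 ≤ p.2 j)} := by
    rw [Set.setOf_forall]
    refine MeasurableSet.iInter fun j => ?_
    have hm : Measurable fun p : ℝ × (Fin m → ℝ) => p.2 j :=
      (measurable_pi_apply j).comp measurable_snd
    exact (hm measurableSet_Icc).inter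
      ((measurableSet_le hm measurable_fst).union
        (measurableSet_le (measurable_fst.add_const _) hm))
  have hTmeas : MeasurableSet T :=
    (((measurable_fst measurableSet_Icc).inter
      (measurableSet_le measurable_fst measurable_const))).inter h2meas
  have hpre : Bset (m+1) (some i) =
      (MeasurableEquiv.piFinSuccAbove (fun _ => ℝ) i) ⁻¹' T := by
    ext ω
    simp only [Bset, badAt, mem_setOf_eq, mem_preimage, piFinSuccAbove_apply', hT]
    constructor
    · rintro ⟨h1, h2, h3⟩
      exact ⟨⟨h1 i, h2⟩, fun j => ⟨h1 _, h3 _⟩⟩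
    · rintro ⟨⟨hi1, hi2⟩, h⟩
      refine ⟨?_, hi2, ?_⟩
      · rw [Fin.forall_iff_succAbove i]
        exact ⟨hi1, fun j => (h j).1⟩
      · rw [Fin.forall_iff_succAbove i]
        exact ⟨Or.inl le_rfl, fun j => (h j).2⟩
  have hmp := MeasureTheory.measurePreserving_piFinSuccAbove
      (fun _ : Fin (m+1) => (volume : Measure ℝ)) i
  rw [hpre]
  have := hmp.measure_preimage hTmeas.nullMeasurableSet
  rw [show (Measure.pi fun _ : Fin (m+1) => (volume : Measure ℝ)) = volume from
    (volume_pi).symm] at this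
  rw [this]
  have hprodeq : (volume : Measure ℝ).prod (Measure.pi fun _ : Fin m => (volume : Measure ℝ))
      = (volume : Measure ℝ).prod (volume : Measure (Fin m → ℝ)) := by
    rw [volume_pi]
  rw [hprodeq, Measure.prod_apply hTmeas]
  have hslice : (fun t : ℝ => volume (Prod.mk t ⁻¹' T)) =
      (Icc (0:ℝ) (1/2)).indicator (fun _ => ENNReal.ofReal (1/2) ^ m) := by
    funext t
    by_cases ht : t ∈ Icc (0:ℝ) (1/2)
    · rw [indicator_of_mem ht]
      have hset : Prod.mk t ⁻¹' T =
          univ.pi (fun _ : Fin m => (Icc 0 t ∪ Icc (t + 1/2) 1 : Set ℝ)) := by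
        ext x
        simp only [hT, mem_preimage, mem_setOf_eq, Set.mem_univ_pi, mem_union, mem_Icc]
        obtain ⟨ht0, ht1⟩ := ht
        constructor
        · rintro ⟨-, h⟩ j
          rcases (h j).2 with h' | h'
          · left; exact ⟨(h j).1.1, h'⟩
          · right; exact ⟨h', (h j).1.2⟩
        · intro h
          refine ⟨⟨⟨ht0, by linarith⟩, ht1⟩, fun j => ?_⟩
          rcases h j with h' | h'
          · exact ⟨⟨h'.1, by linarith [h'.2]⟩, Or.inl h'.2⟩
          · exact ⟨⟨by linarith [h'.1], h'.2⟩, Or.inr h'.1⟩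
      rw [hset, volume_pi, Measure.pi_pi]
      have hval : volume (Icc 0 t ∪ Icc (t + 1/2) 1 : Set ℝ) = ENNReal.ofReal (1/2) := by
        obtain ⟨ht0, ht1⟩ := ht
        rw [measure_union (by
          apply Set.disjoint_left.mpr
          rintro x ⟨-, hx2⟩ ⟨hx3, -⟩
          linarith) measurableSet_Icc]
        rw [Real.volume_Icc, Real.volume_Icc, ← ENNReal.ofReal_add (by linarith) (by linarith)]
        rw [show t - 0 + (1 - (t + 1/2)) = 1/2 by ring]
      simp only [hval, Finset.prod_const, Finset.card_univ, Fintype.card_fin]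
    · rw [indicator_of_notMem ht]
      have : Prod.mk t ⁻¹' T = ∅ := by
        ext x
        simp only [hT, mem_preimage, mem_setOf_eq, mem_empty_iff_false, iff_false]
        rintro ⟨⟨h1, h2⟩, -⟩
        exact ht ⟨h1.1, h2⟩
      rw [this, measure_empty]
  rw [hslice, lintegral_indicator measurableSet_Icc, setLIntegral_const, Real.volume_Icc]
  rw [pow_succ]
  norm_num

lemma volume_diag {m : ℕ} (i j : Fin m) (hij : i ≠ j) :
    volume {ω : Fin m → ℝ | ω i = ω j} = 0 := by
  cases m with
  | zero => exact i.elim0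
  | succ m' =>
    obtain ⟨j', hj'⟩ := Fin.exists_succAbove_eq (Ne.symm hij)
    set T : Set (ℝ × (Fin m' → ℝ)) := {p | p.1 = p.2 j'} with hT
    have hTmeas : MeasurableSet T :=
      measurableSet_eq_fun measurable_fst ((measurable_pi_apply j').comp measurable_snd)
    have hpre : {ω : Fin (m'+1) → ℝ | ω i = ω j} =
        (MeasurableEquiv.piFinSuccAbove (fun _ => ℝ) i) ⁻¹' T := by
      ext ω
      simp only [mem_setOf_eq, mem_preimage, piFinSuccAbove_apply', hT]
      rw [hj']
    have hmp := MeasureTheory.measurePreserving_piFinSuccAbove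
        (fun _ : Fin (m'+1) => (volume : Measure ℝ)) i
    rw [hpre]
    have := hmp.measure_preimage hTmeas.nullMeasurableSet
    rw [show (Measure.pi fun _ : Fin (m'+1) => (volume : Measure ℝ)) = volume from
      (volume_pi).symm] at this
    rw [this, Measure.prod_apply hTmeas]
    have : ∀ t : ℝ, (Measure.pi fun _ : Fin m' => (volume : Measure ℝ))
        (Prod.mk t ⁻¹' T) = 0 := by
      intro t
      have : Prod.mk t ⁻¹' T = {x : Fin m' → ℝ | x j' = t} := by
        ext x; simp only [hT, mem_preimage, mem_setOf_eq, eq_comm]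
      rw [this]
      exact Measure.pi_hyperplane (fun _ : Fin m' => (volume : Measure ℝ)) j' t
    simp [this]

lemma volume_plane {m : ℕ} (i : Fin m) (c : ℝ) :
    volume {ω : Fin m → ℝ | ω i = c} = 0 := by
  rw [volume_pi]
  exact Measure.pi_hyperplane (fun _ : Fin m => (volume : Measure ℝ)) i c

lemma Bset_pairwise_aedisjoint (m : ℕ) :
    Pairwise (fun a b => AEDisjoint volume (Bset m a) (Bset m b)) := by
  have key : ∀ i : Fin m, AEDisjoint volume (Bset m none) (Bset m (some i)) := by
    intro i
    refine measure_mono_null (t := {ω : Fin m → ℝ | ω i = 0} ∪ {ω | ω i = 1/2}) ?_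
      (measure_union_null (volume_plane i 0) (volume_plane i (1/2)))
    rintro ω ⟨⟨hb1, -, hs0⟩, ⟨-, hi2, -⟩⟩
    rcases hs0 i with h | h
    · left; exact le_antisymm h (hb1 i).1
    · right; exact le_antisymm hi2 (by linarith)
  have key2 : ∀ i j : Fin m, i ≠ j →
      AEDisjoint volume (Bset m (some i)) (Bset m (some j)) := by
    intro i j hij
    refine measure_mono_null
      (t := {ω : Fin m → ℝ | ω i = ω j} ∪ ({ω | ω i = 1/2} ∪ {ω | ω j = 1/2})) ?_
      (measure_union_null (volume_diag i j hij)
        (measure_union_null (volume_plane i (1/2)) (volume_plane j (1/2))))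
    rintro ω ⟨⟨hbox, hi2, hsi⟩, ⟨-, hj2, hsj⟩⟩
    rcases hsi j with h1 | h1 <;> rcases hsj i with h2 | h2
    · left; exact le_antisymm h2 h1
    · right; left; exact le_antisymm hi2 (by linarith [(hbox j).1])
    · right; right; exact le_antisymm hj2 (by linarith [(hbox i).1])
    · exfalso; linarith
  intro o₁ o₂ h
  match o₁, o₂ with
  | none, none => exact absurd rfl h
  | none, some i => exact key i
  | some i, none => exact (key i).symm
  | some i, some j => exact key2 i j (fun hc => h (by rw [hc]))

lemma volume_Bset_some' {m : ℕ} (i : Fin m) :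
    volume (Bset m (some i)) = ENNReal.ofReal (1/2) ^ m := by
  cases m with
  | zero => exact i.elim0
  | succ m' => exact volume_Bset_some i

lemma volume_bad_union (m : ℕ) :
    volume (⋃ o, Bset m o) = ((m : ENNReal) + 1) * ENNReal.ofReal (1/2) ^ m := by
  rw [measure_iUnion₀ (Bset_pairwise_aedisjoint m)
      (fun o => (measurable_Bset m o).nullMeasurableSet), tsum_fintype]
  rw [Fintype.sum_option, volume_Bset_none]
  simp only [volume_Bset_some', Finset.sum_const, Finset.card_univ, Fintype.card_fin,
    nsmul_eq_mul]
  ring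

theorem master (m : ℕ) :
    volume {ω : Fin m → ℝ | (∀ i, ω i ∈ Icc (0:ℝ) 1) ∧ ∀ g ∈ spacings m ω, g < 1/2}
      = ENNReal.ofReal (1 - ((m : ℝ) + 1) / 2 ^ m) := by
  have hsetEq : {ω : Fin m → ℝ | (∀ i, ω i ∈ Icc (0:ℝ) 1) ∧ ∀ g ∈ spacings m ω, g < 1/2}
      = {ω : Fin m → ℝ | ∀ i, ω i ∈ Icc (0:ℝ) 1} \ ⋃ o, Bset m o := by
    ext ω
    simp only [mem_setOf_eq, mem_diff, mem_iUnion]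
    constructor
    · rintro ⟨hbox, hgood⟩
      refine ⟨hbox, ?_⟩
      rintro ⟨o, ho⟩
      have hbad := (spacings_lt_half_iff ω hbox).mp hgood
      cases o with
      | none => exact hbad (Or.inl ho.2)
      | some i => exact hbad (Or.inr ⟨i, ho.2⟩)
    · rintro ⟨hbox, hno⟩
      refine ⟨hbox, (spacings_lt_half_iff ω hbox).mpr ?_⟩
      rintro (h | ⟨i, h⟩)
      · exact hno ⟨none, hbox, h⟩
      · exact hno ⟨some i, hbox, h⟩
  have hsub : (⋃ o, Bset m o) ⊆ {ω : Fin m → ℝ | ∀ i, ω i ∈ Icc (0:ℝ) 1} := by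
    refine iUnion_subset fun o => ?_
    cases o with
    | none => exact fun ω hω => hω.1
    | some i => exact fun ω hω => hω.1
  have hUnionMeas : MeasurableSet (⋃ o, Bset m o) := MeasurableSet.iUnion (measurable_Bset m)
  have hfin : volume (⋃ o, Bset m o) ≠ ⊤ := by
    rw [volume_bad_union]
    exact ENNReal.mul_ne_top (by simp) (ENNReal.pow_ne_top ENNReal.ofReal_ne_top)
  rw [hsetEq, measure_diff hsub hUnionMeas.nullMeasurableSet hfin, volume_box,
    volume_bad_union]
  have harith : ENNReal.ofReal (((m : ℝ) + 1) / 2 ^ m)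
      = ((m : ENNReal) + 1) * ENNReal.ofReal (1/2) ^ m := by
    rw [show ((m : ℝ) + 1) / 2 ^ m = ((m : ℝ) + 1) * (1/2) ^ m by
      rw [div_eq_mul_inv, one_div, inv_pow]]
    rw [ENNReal.ofReal_mul (by positivity), ENNReal.ofReal_pow (by norm_num)]
    congr 1
    rw [ENNReal.ofReal_add (by positivity) zero_le_one, ENNReal.ofReal_natCast,
      ENNReal.ofReal_one]
  rw [ENNReal.ofReal_sub _ (by positivity), ENNReal.ofReal_one, harith]

/-- If `[0,1]` is broken at `n−1` i.i.d. uniform points into `n` pieces, the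
probability that the `n` pieces form an `n`-gon (every piece `< 1/2`) is
`1 − n/2^{n−1}`. -/
theorem prob_all_spacings_lt_half (n : ℕ) (hn : 1 ≤ n) :
    volume {ω : Fin (n - 1) → ℝ | (∀ i, ω i ∈ Icc (0:ℝ) 1) ∧
        ∀ g ∈ spacings (n - 1) ω, g < 1 / 2}
      = ENNReal.ofReal (1 - n / 2 ^ (n - 1)) := by
  obtain ⟨m, rfl⟩ : ∃ m, n = m + 1 := ⟨n - 1, by omega⟩
  have h := master m
  rw [show ((m : ℝ) + 1) = ((m + 1 : ℕ) : ℝ) by push_cast; ring] at h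
  exact h
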